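/- Let p be an odd integer. Then for every integer j, the odd partial Kummer sum for q = 4, namely Σ_{ν odd, 0 ≤ ν ≤ 7} ζ_8^{jν − pν³}, vanishes if and only if j is even or j ≡ 3p (mod 4). Equivalently, 𝔓(p/4) = { j ∈ [0,7] ∩ ℤ : (j ≡ 0 mod 2) ∪ (j ≡ 3p mod 4) }. -/

import Mathlib

/-- ζ_m = exp(2πi/m), the primitive m-th root of unity. -/
noncomputable def zeta (m : ℕ) : ℂ := Complex.exp (2 * Real.pi * Complex.I / (m : ℂ))

/-- For an odd integer p and every integer j, the odd partial Kummer
sum for q = 4, namely Σ_{ν odd, 0 ≤ ν ≤ 7} ζ_8^{jν − pν³}, vanishes if and only if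
j is even or j ≡ 3p (mod 4). -/
theorem points_of_constancy_q_four (p : ℤ) (hp : Odd p) (j : ℤ) :
    (∑ ν ∈ (Finset.range 8).filter (fun ν => Odd ν),
        zeta 8 ^ (j * (ν : ℤ) - p * (ν : ℤ) ^ 3)) = 0 ↔
    (Even j ∨ j ≡ 3 * p [ZMOD 4]) := by
  have hz : IsPrimitiveRoot (zeta 8) 8 := by
    have := Complex.isPrimitiveRoot_exp 8 (by norm_num)
    convert this using 2
    rfl
  have hz0 : zeta 8 ≠ 0 := hz.ne_zero (by norm_num)
  have h8 : zeta 8 ^ (8:ℤ) = 1 := by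
    have := hz.pow_eq_one
    rw [show (8:ℤ) = ((8:ℕ):ℤ) by norm_num, zpow_natCast]
    exact this
  set z := zeta 8 with hzdef
  have hfilt : (Finset.range 8).filter (fun ν => Odd ν) = {1,3,5,7} := by decide
  rw [hfilt]
  set k := j - p with hk
  set w := z ^ k with hw
  have hw0 : w ≠ 0 := zpow_ne_zero _ hz0
  have hkey : ∀ a b : ℤ, z ^ (k * a + 8 * b) = w ^ a := by
    intro a b
    rw [zpow_add₀ hz0, zpow_mul, zpow_mul, h8, one_zpow, mul_one]
  have hsum : (∑ ν ∈ ({1,3,5,7} : Finset ℕ), z ^ (j * (ν : ℤ) - p * (ν : ℤ) ^ 3))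
      = w ^ (1:ℤ) + w ^ (3:ℤ) + w ^ (5:ℤ) + w ^ (7:ℤ) := by
    rw [show ({1,3,5,7} : Finset ℕ) = {1} ∪ {3} ∪ {5} ∪ {7} by decide]
    rw [Finset.sum_union (by decide), Finset.sum_union (by decide),
      Finset.sum_union (by decide)]
    simp only [Finset.sum_singleton]
    push_cast
    rw [show j * 1 - p * 1 = k * 1 + 8 * 0 by ring,
      show j * 3 - p * 27 = k * 3 + 8 * (-3 * p) by ring,
      show j * 5 - p * 125 = k * 5 + 8 * (-15 * p) by ring,
      show j * 7 - p * 343 = k * 7 + 8 * (-42 * p) by ring,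
      hkey, hkey, hkey, hkey]
  rw [hsum]
  set v := w ^ (2:ℤ) with hv
  have hv4 : v ^ (4:ℤ) = 1 := by
    rw [hv, ← zpow_mul, hw, ← zpow_mul]
    rw [show k * (2 * 4) = 8 * k by ring, zpow_mul, h8, one_zpow]
  have hfac : w ^ (1:ℤ) + w ^ (3:ℤ) + w ^ (5:ℤ) + w ^ (7:ℤ)
      = w * (1 + v + v ^ 2 + v ^ 3) := by
    rw [hv]
    rw [show (1:ℤ) = ((1:ℕ):ℤ) by norm_num, show (3:ℤ) = ((3:ℕ):ℤ) by norm_num,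
      show (5:ℤ) = ((5:ℕ):ℤ) by norm_num, show (7:ℤ) = ((7:ℕ):ℤ) by norm_num,
      show (2:ℤ) = ((2:ℕ):ℤ) by norm_num]
    rw [zpow_natCast, zpow_natCast, zpow_natCast, zpow_natCast, zpow_natCast]
    ring
  rw [hfac]
  have hveq : v = 1 ↔ (4:ℤ) ∣ k := by
    rw [hv, hw, ← zpow_mul, hz.zpow_eq_one_iff_dvd]
    constructor
    · rintro ⟨c, hc⟩; exact ⟨c, by omega⟩
    · rintro ⟨c, hc⟩; exact ⟨c, by omega⟩
  have hmain : w * (1 + v + v ^ 2 + v ^ 3) = 0 ↔ v ≠ 1 := by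
    constructor
    · intro h hv1
      rw [hv1] at h
      simp only [one_pow, mul_eq_zero] at h
      rcases h with h | h
      · exact hw0 h
      · norm_num at h
    · intro hv1
      have hz4 : (v - 1) * (1 + v + v ^ 2 + v ^ 3) = 0 := by
        have : v ^ (4:ℤ) = v ^ (4:ℕ) := by norm_cast
        have h4 : v ^ (4:ℕ) = 1 := by rw [← this, hv4]
        linear_combination h4
      rcases mul_eq_zero.mp hz4 with h | h
      · exact absurd (sub_eq_zero.mp h) hv1
      · rw [h, mul_zero]
  rw [hmain, Ne, hveq, hk]
  -- arithmetic part
  obtain ⟨m, rfl⟩ := hp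
  rw [Int.even_iff, Int.ModEq]
  omega
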